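/- Let A be a finite-dimensional k-algebra, Q a finitely generated left A-module, Λ = End_A(Q)^op, and M a finitely generated left A-module. Then the evaluation map M → Hom_Λ(Hom_A(M, Q), Q) is an isomorphism if and only if Q-domdim_A(M) ≥ 2, i.e., there exists an exact sequence 0 → M → Q_1 → Q_2 with Q_1, Q_2 ∈ add(Q) that remains exact under Hom_A(−, Q). -/

import Mathlib

universe u
open MulOpposite

noncomputable section
namespace Paper

section RingDefs
variable (B : Type u) [Ring B]

/-- `X` belongs to `add Q`: it is a direct summand of a finite direct sum of copies of `Q`. -/
def InAdd (Q X : ModuleCat.{u} B) : Prop :=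
  ∃ (n : ℕ) (s : X →ₗ[B] (Fin n → Q)) (r : (Fin n → Q) →ₗ[B] X), r ∘ₗ s = LinearMap.id

/-- A superfluous (small) submodule. -/
def Superfluous {P : ModuleCat.{u} B} (N : Submodule B P) : Prop :=
  ∀ K : Submodule B P, K ⊔ N = ⊤ → K = ⊤

/-- An essential (large) submodule. -/
def Essential {P : ModuleCat.{u} B} (N : Submodule B P) : Prop :=
  ∀ K : Submodule B P, K ⊓ N = ⊥ → K = ⊥

/-- `p : P → X` is a projective cover. -/
def IsProjCover {P X : ModuleCat.{u} B} (p : P →ₗ[B] X) : Prop :=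
  Module.Projective B P ∧ Function.Surjective p ∧ Superfluous B (LinearMap.ker p)

/-- `ι : X → I` is an injective envelope. -/
def IsInjEnvelope {X I : ModuleCat.{u} B} (ι : X →ₗ[B] I) : Prop :=
  Module.Injective B I ∧ Function.Injective ι ∧ Essential B (LinearMap.range ι)

/-- The zero module. -/
def zeroMod : ModuleCat.{u} B := ModuleCat.of B PUnit

/-- An exact sequence `0 → P_m → ⋯ → P_1 → P_0 → X → 0` whose terms satisfy the
predicate `T` and which remains exact under `Hom(test, −)`. -/
def ResLE (test : ModuleCat.{u} B) (T : ModuleCat.{u} B → Prop)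
    (X : ModuleCat.{u} B) (m : ℕ) : Prop :=
  ∃ (P : ℕ → ModuleCat.{u} B) (d : ∀ j, P (j+1) →ₗ[B] P j) (aug : P 0 →ₗ[B] X),
    (∀ j, j ≤ m → T (P j)) ∧ (∀ j, m < j → Subsingleton (P j)) ∧
    Function.Surjective aug ∧ Function.Exact (d 0) aug ∧
    (∀ j, Function.Exact (d (j+1)) (d j)) ∧
    (∀ f : test →ₗ[B] X, ∃ h : test →ₗ[B] P 0, aug ∘ₗ h = f) ∧
    (∀ f : test →ₗ[B] P 0, aug ∘ₗ f = 0 → ∃ h : test →ₗ[B] P 1, d 0 ∘ₗ h = f) ∧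
    (∀ j, ∀ f : test →ₗ[B] P (j+1), d j ∘ₗ f = 0 →
      ∃ h : test →ₗ[B] P (j+2), d (j+1) ∘ₗ h = f)

/-- An exact sequence `0 → X → I_0 → ⋯ → I_m → 0` whose terms satisfy the predicate `T`
and which remains exact under `Hom(−, test)`. -/
def CoresLE (test : ModuleCat.{u} B) (T : ModuleCat.{u} B → Prop)
    (X : ModuleCat.{u} B) (m : ℕ) : Prop :=
  ∃ (M : ℕ → ModuleCat.{u} B) (ι : X →ₗ[B] M 0) (d : ∀ j, M j →ₗ[B] M (j+1)),
    (∀ j, j ≤ m → T (M j)) ∧ (∀ j, m < j → Subsingleton (M j)) ∧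
    Function.Injective ι ∧ Function.Exact ι (d 0) ∧
    (∀ j, Function.Exact (d j) (d (j+1))) ∧
    (∀ f : X →ₗ[B] test, ∃ h : M 0 →ₗ[B] test, h ∘ₗ ι = f) ∧
    (∀ f : M 0 →ₗ[B] test, f ∘ₗ ι = 0 → ∃ h : M 1 →ₗ[B] test, h ∘ₗ d 0 = f) ∧
    (∀ j, ∀ f : M (j+1) →ₗ[B] test, f ∘ₗ d j = 0 →
      ∃ h : M (j+2) →ₗ[B] test, h ∘ₗ d (j+1) = f)

/-- Projective dimension at most `n`. -/
def pdLE (X : ModuleCat.{u} B) (n : ℕ) : Prop :=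
  ResLE B (zeroMod B) (fun P => Module.Projective B P) X n

/-- Injective dimension at most `n`. -/
def idLE (X : ModuleCat.{u} B) (n : ℕ) : Prop :=
  CoresLE B (zeroMod B) (fun I => Module.Injective B I) X n

/-- Projective dimension equal to `n`. -/
def pdEq (X : ModuleCat.{u} B) (n : ℕ) : Prop :=
  pdLE B X n ∧ ∀ j, pdLE B X j → n ≤ j

/-- Injective dimension equal to `n`. -/
def idEq (X : ModuleCat.{u} B) (n : ℕ) : Prop :=
  idLE B X n ∧ ∀ j, idLE B X j → n ≤ j

/-- Projective dimension as an element of `ℕ∞`. -/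
def pdDim (X : ModuleCat.{u} B) : ℕ∞ :=
  sInf {c : ℕ∞ | ∃ n : ℕ, c = n ∧ pdLE B X n}

/-- Injective dimension as an element of `ℕ∞`. -/
def idDim (X : ModuleCat.{u} B) : ℕ∞ :=
  sInf {c : ℕ∞ | ∃ n : ℕ, c = n ∧ idLE B X n}

/-- Relative dominant dimension of `X` with respect to `Q` is at least `n`:
there is an exact sequence `0 → X → Q_1 → ⋯ → Q_n` with `Q_i ∈ add Q`
remaining exact under `Hom(−, Q)`. -/
def domdimGE (Q X : ModuleCat.{u} B) (n : ℕ) : Prop :=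
  n = 0 ∨ ∃ (M : ℕ → ModuleCat.{u} B) (ι : X →ₗ[B] M 0) (d : ∀ j, M j →ₗ[B] M (j+1)),
    (∀ j, j + 1 ≤ n → InAdd B Q (M j)) ∧
    Function.Injective ι ∧ (2 ≤ n → Function.Exact ι (d 0)) ∧
    (∀ j, j + 3 ≤ n → Function.Exact (d j) (d (j+1))) ∧
    (∀ f : X →ₗ[B] Q, ∃ h : M 0 →ₗ[B] Q, h ∘ₗ ι = f) ∧
    (2 ≤ n → ∀ f : M 0 →ₗ[B] Q, f ∘ₗ ι = 0 → ∃ h : M 1 →ₗ[B] Q, h ∘ₗ d 0 = f) ∧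
    (∀ j, j + 3 ≤ n → ∀ f : M (j+1) →ₗ[B] Q, f ∘ₗ d j = 0 →
      ∃ h : M (j+2) →ₗ[B] Q, h ∘ₗ d (j+1) = f)

/-- Relative codominant dimension of `X` with respect to `Q` is at least `n`. -/
def codomdimGE (Q X : ModuleCat.{u} B) (n : ℕ) : Prop :=
  n = 0 ∨ ∃ (M : ℕ → ModuleCat.{u} B) (aug : M 0 →ₗ[B] X) (d : ∀ j, M (j+1) →ₗ[B] M j),
    (∀ j, j + 1 ≤ n → InAdd B Q (M j)) ∧
    Function.Surjective aug ∧ (2 ≤ n → Function.Exact (d 0) aug) ∧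
    (∀ j, j + 3 ≤ n → Function.Exact (d (j+1)) (d j)) ∧
    (∀ f : Q →ₗ[B] X, ∃ h : Q →ₗ[B] M 0, aug ∘ₗ h = f) ∧
    (2 ≤ n → ∀ f : Q →ₗ[B] M 0, aug ∘ₗ f = 0 → ∃ h : Q →ₗ[B] M 1, d 0 ∘ₗ h = f) ∧
    (∀ j, j + 3 ≤ n → ∀ f : Q →ₗ[B] M (j+1), d j ∘ₗ f = 0 →
      ∃ h : Q →ₗ[B] M (j+2), d (j+1) ∘ₗ h = f)

/-- Relative dominant dimension with respect to `Q`, as an element of `ℕ∞`. -/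
def relDomDim (Q X : ModuleCat.{u} B) : ℕ∞ :=
  sSup {c : ℕ∞ | ∃ n : ℕ, c = n ∧ domdimGE B Q X n}

/-- Relative codominant dimension with respect to `Q`, as an element of `ℕ∞`. -/
def relCodomDim (Q X : ModuleCat.{u} B) : ℕ∞ :=
  sSup {c : ℕ∞ | ∃ n : ℕ, c = n ∧ codomdimGE B Q X n}

/-- A projective resolution. -/
structure ProjRes (X : ModuleCat.{u} B) where
  P : ℕ → ModuleCat.{u} B
  d : ∀ j, P (j+1) →ₗ[B] P j
  aug : P 0 →ₗ[B] X
  proj : ∀ j, Module.Projective B (P j)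
  augSurj : Function.Surjective aug
  exact0 : Function.Exact (d 0) aug
  exact : ∀ j, Function.Exact (d (j+1)) (d j)

/-- Vanishing of `Ext^i(X, Y)`, expressed via projective resolutions. -/
def ExtVanish (X Y : ModuleCat.{u} B) : ℕ → Prop
  | 0 => Subsingleton (X →ₗ[B] Y)
  | (i+1) => ∀ R : ProjRes B X, ∀ f : R.P (i+1) →ₗ[B] Y,
      f ∘ₗ R.d (i+1) = 0 → ∃ g : R.P i →ₗ[B] Y, f = g ∘ₗ R.d i

/-- `Q` is self-orthogonal: `Ext^i(Q, Q) = 0` for all `i > 0`. -/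
def SelfOrth (Q : ModuleCat.{u} B) : Prop := ∀ i, 1 ≤ i → ExtVanish B Q Q i

/-- `Z` is a (first, minimal) syzygy of `X`. -/
def IsSyzygyOf (X Z : ModuleCat.{u} B) : Prop :=
  ∃ (P : ModuleCat.{u} B) (p : P →ₗ[B] X), IsProjCover B p ∧
    Nonempty (Z ≃ₗ[B] LinearMap.ker p)

/-- `Z` is an `n`-th syzygy `Ω^n X`. -/
def IsOmegaOf : ℕ → ModuleCat.{u} B → ModuleCat.{u} B → Prop
  | 0, X, Z => Nonempty (Z ≃ₗ[B] X)
  | (n+1), X, Z => ∃ Y, IsSyzygyOf B X Y ∧ IsOmegaOf n Y Z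

/-- `Z` is a (first, minimal) cosyzygy of `X`. -/
def IsCosyzygyOf (X Z : ModuleCat.{u} B) : Prop :=
  ∃ (I : ModuleCat.{u} B) (ι : X →ₗ[B] I), IsInjEnvelope B ι ∧
    Nonempty (Z ≃ₗ[B] (I ⧸ LinearMap.range ι))

/-- `Z` is an `n`-th cosyzygy `Ω^{-n} X`. -/
def IsOmegaInvOf : ℕ → ModuleCat.{u} B → ModuleCat.{u} B → Prop
  | 0, X, Z => Nonempty (Z ≃ₗ[B] X)
  | (n+1), X, Z => ∃ Y, IsCosyzygyOf B X Y ∧ IsOmegaInvOf n Y Z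

/-- Precomposition with `g`, as a map of right `B`-modules `Hom(P₀,B) → Hom(P₁,B)`. -/
def lprecomp {P1 P0 : ModuleCat.{u} B} (g : P1 →ₗ[B] P0) :
    (P0 →ₗ[B] B) →ₗ[Bᵐᵒᵖ] (P1 →ₗ[B] B) where
  toFun h := h ∘ₗ g
  map_add' _ _ := rfl
  map_smul' _ _ := rfl

/-- `T` is a transpose `Tr X` (computed from a minimal projective presentation). -/
def IsTransposeOf (X : ModuleCat.{u} B) (T : ModuleCat.{u} Bᵐᵒᵖ) : Prop :=
  ∃ (P1 P0 : ModuleCat.{u} B) (g : P1 →ₗ[B] P0) (p : P0 →ₗ[B] X),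
    IsProjCover B p ∧ Module.Projective B P1 ∧ Function.Exact g p ∧
    Superfluous B (LinearMap.ker g) ∧
    Nonempty (T ≃ₗ[Bᵐᵒᵖ] ((P1 →ₗ[B] B) ⧸ LinearMap.range (lprecomp B g)))

/-- The canonical ring homomorphism `B →+* Bᵐᵒᵖᵐᵒᵖ`. -/
def opOpHom : B →+* Bᵐᵒᵖᵐᵒᵖ where
  toFun b := op (op b)
  map_one' := rfl
  map_mul' _ _ := rfl
  map_zero' := rfl
  map_add' _ _ := rfl


/-- An `F_Mo`-projective resolution: terms in `add(B ⊕ Mo)`, exact, and remaining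
exact under `Hom(Mo, −)`. -/
structure FProjRes (Mo X : ModuleCat.{u} B) where
  P : ℕ → ModuleCat.{u} B
  d : ∀ j, P (j+1) →ₗ[B] P j
  aug : P 0 →ₗ[B] X
  mem : ∀ j, InAdd B (ModuleCat.of B (B × Mo)) (P j)
  augSurj : Function.Surjective aug
  exact0 : Function.Exact (d 0) aug
  exact : ∀ j, Function.Exact (d (j+1)) (d j)
  lift0 : ∀ f : Mo →ₗ[B] X, ∃ h : Mo →ₗ[B] P 0, aug ∘ₗ h = f
  lift1 : ∀ f : Mo →ₗ[B] P 0, aug ∘ₗ f = 0 → ∃ h : Mo →ₗ[B] P 1, d 0 ∘ₗ h = f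
  lift : ∀ j, ∀ f : Mo →ₗ[B] P (j+1), d j ∘ₗ f = 0 →
    ∃ h : Mo →ₗ[B] P (j+2), d (j+1) ∘ₗ h = f

/-- Vanishing of the relative extension group `Ext^i_{F_Mo}(X, Y)`, computed via
`F_Mo`-projective resolutions. -/
def FExtVanish (Mo X Y : ModuleCat.{u} B) : ℕ → Prop
  | 0 => True
  | (i+1) => ∀ R : FProjRes B Mo X, ∀ f : R.P (i+1) →ₗ[B] Y,
      f ∘ₗ R.d (i+1) = 0 → ∃ g : R.P i →ₗ[B] Y, f = g ∘ₗ R.d i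

end RingDefs

section Duality
variable (k : Type u) [Field k] (B : Type u) [Ring B] [Algebra k B]

noncomputable instance kmod (X : ModuleCat.{u} B) : Module k X :=
  Module.compHom X (algebraMap k B)

instance kmodSMulComm (X : ModuleCat.{u} B) : SMulCommClass B k X :=
  ⟨fun b c x => by
    show b • ((algebraMap k B c) • x) = (algebraMap k B c) • (b • x)
    rw [← mul_smul, ← mul_smul, Algebra.commutes]⟩

instance kmodTower (X : ModuleCat.{u} B) : IsScalarTower k B X :=
  ⟨fun c b x => by
    show (c • b) • x = (algebraMap k B c) • (b • x)
    rw [Algebra.smul_def, mul_smul]⟩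

noncomputable instance dualModL (X : ModuleCat.{u} B) : Module Bᵐᵒᵖ (X →ₗ[k] k) where
  smul b φ := φ ∘ₗ (DistribMulAction.toLinearMap k X b.unop)
  one_smul φ := by
    ext x
    show φ ((1 : Bᵐᵒᵖ).unop • x) = φ x
    rw [unop_one, one_smul]
  mul_smul b c φ := by
    ext x
    show φ ((b * c).unop • x) = φ (c.unop • b.unop • x)
    rw [unop_mul, mul_smul]
  smul_zero b := rfl
  smul_add b φ ψ := rfl
  add_smul b c φ := by
    ext x
    show φ ((b + c).unop • x) = φ (b.unop • x) + φ (c.unop • x)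
    rw [unop_add, add_smul, map_add]
  zero_smul φ := by
    ext x
    show φ ((0 : Bᵐᵒᵖ).unop • x) = 0
    rw [unop_zero, zero_smul, map_zero]

/-- The standard duality `D = Hom_k(−, k)`, sending a left `B`-module to a right
`B`-module. -/
def Dop (X : ModuleCat.{u} B) : ModuleCat.{u} Bᵐᵒᵖ :=
  ModuleCat.of Bᵐᵒᵖ (X →ₗ[k] k)

noncomputable instance dualModR (Y : ModuleCat.{u} Bᵐᵒᵖ) : Module B (Y →ₗ[k] k) where
  smul b φ := φ ∘ₗ (DistribMulAction.toLinearMap k Y (op b))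
  one_smul φ := by
    ext x
    show φ ((op (1:B)) • x) = φ x
    rw [op_one, one_smul]
  mul_smul b c φ := by
    ext x
    show φ ((op (b * c)) • x) = φ ((op c) • (op b) • x)
    rw [op_mul, mul_smul]
  smul_zero b := rfl
  smul_add b φ ψ := rfl
  add_smul b c φ := by
    ext x
    show φ ((op (b + c)) • x) = φ ((op b) • x) + φ ((op c) • x)
    rw [op_add, add_smul, map_add]
  zero_smul φ := by
    ext x
    show φ ((op (0 : B)) • x) = 0
    rw [op_zero, zero_smul, map_zero]

/-- The standard duality `D = Hom_k(−, k)`, sending a right `B`-module to a left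
`B`-module. -/
def Dunop (Y : ModuleCat.{u} Bᵐᵒᵖ) : ModuleCat.{u} B :=
  ModuleCat.of B (Y →ₗ[k] k)

/-- `D(B_B)`, the standard injective cogenerator of `B`-Mod. -/
def Dcogen : ModuleCat.{u} B := Dunop k B (ModuleCat.of Bᵐᵒᵖ B)

/-- `T ≅ τ X = D Tr X`, the Auslander–Reiten translate. -/
def IsTauOf (X T : ModuleCat.{u} B) : Prop :=
  ∃ Tr : ModuleCat.{u} Bᵐᵒᵖ, IsTransposeOf B X Tr ∧ Nonempty (T ≃ₗ[B] Dunop k B Tr)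

/-- `T ≅ τ_n X = τ Ω^{n-1} X`. -/
def IsTauN (n : ℕ) (X T : ModuleCat.{u} B) : Prop :=
  ∃ Z, IsOmegaOf B (n-1) X Z ∧ IsTauOf k B Z T

/-- `T ≅ τ⁻ X = Tr D X`, the inverse Auslander–Reiten translate. -/
def IsTauInvOf (X T : ModuleCat.{u} B) : Prop :=
  ∃ Tr2 : ModuleCat.{u} Bᵐᵒᵖᵐᵒᵖ, IsTransposeOf Bᵐᵒᵖ (Dop k B X) Tr2 ∧
    Nonempty (T ≃ₗ[B] ((ModuleCat.restrictScalars (opOpHom B)).obj Tr2))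

/-- `T ≅ τ⁻_n X = τ⁻ Ω^{-(n-1)} X`. -/
def IsTauInvN (n : ℕ) (X T : ModuleCat.{u} B) : Prop :=
  ∃ Z, IsOmegaInvOf B (n-1) X Z ∧ IsTauInvOf k B Z T

/-- The Nakayama functor `ν = D Hom_B(−, B)` (on objects). -/
def nu (X : ModuleCat.{u} B) : ModuleCat.{u} B :=
  Dunop k B (ModuleCat.of Bᵐᵒᵖ (X →ₗ[B] B))

/-- The inverse Nakayama functor `ν⁻ = Hom_B(D(−), B)` (on objects). -/
def nuInv (X : ModuleCat.{u} B) : ModuleCat.{u} B :=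
  (ModuleCat.restrictScalars (opOpHom B)).obj
    (ModuleCat.of Bᵐᵒᵖᵐᵒᵖ ((Dop k B X) →ₗ[Bᵐᵒᵖ] Bᵐᵒᵖ))

/-- Relative `add Q`-dimension of `X` is at most `m`. -/
def RelAddDimLE (Q X : ModuleCat.{u} B) (m : ℕ) : Prop :=
  ResLE B Q (InAdd B Q) X m

/-- Relative `add Q`-codimension of `X` is at most `m`. -/
def RelAddCodimLE (Q X : ModuleCat.{u} B) (m : ℕ) : Prop :=
  CoresLE B Q (InAdd B Q) X m

/-- `Q` is an `l`-quasi-generator (without minimality of `l`). -/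
def QuasiGenLE (Q : ModuleCat.{u} B) (l : ℕ) : Prop :=
  CoresLE B Q (InAdd B Q) (ModuleCat.of B B) l

/-- `Q` is an `l`-quasi-generator: `l` is minimal. -/
def IsQuasiGen (Q : ModuleCat.{u} B) (l : ℕ) : Prop :=
  QuasiGenLE B Q l ∧ ∀ j, QuasiGenLE B Q j → l ≤ j

/-- `Q` is an `m`-quasi-cogenerator (without minimality of `m`). -/
def QuasiCogenLE (Q : ModuleCat.{u} B) (m : ℕ) : Prop :=
  ResLE B Q (InAdd B Q) (Dcogen k B) m

/-- `Q` is an `m`-quasi-cogenerator: `m` is minimal. -/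
def IsQuasiCogen (Q : ModuleCat.{u} B) (m : ℕ) : Prop :=
  QuasiCogenLE k B Q m ∧ ∀ j, QuasiCogenLE k B Q j → m ≤ j

/-- `(B, Q)` is a relative `n`-Auslander–Gorenstein pair. -/
def IsRelAGPair (Q : ModuleCat.{u} B) (n : ℕ) : Prop :=
  idLE B (ModuleCat.of B B) n ∧ idLE Bᵐᵒᵖ (ModuleCat.of Bᵐᵒᵖ Bᵐᵒᵖ) n ∧
  SelfOrth B Q ∧ domdimGE B Q (ModuleCat.of B B) n

/-- `Q` is an `(n, m, l)`-quasi-precluster tilting module. -/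
def IsQPCT (Q : ModuleCat.{u} B) (n m l : ℕ) : Prop :=
  (∀ i, 1 ≤ i → i ≤ n - 2 → ExtVanish B Q Q i) ∧
  IsQuasiGen B Q l ∧
  IsQuasiCogen k B Q m ∧
  (∃ T, IsTauN k B (n - m - 1) Q T ∧ RelAddDimLE B Q T m) ∧
  (∃ T, IsTauInvN k B (n - l - 1) Q T ∧ RelAddCodimLE B Q T l)

/-- Precomposition with `g`, as a `k`-linear map between Hom spaces. -/
def pcompk {X Y Z : ModuleCat.{u} B} (g : X →ₗ[B] Y) :
    (Y →ₗ[B] Z) →ₗ[k] (X →ₗ[B] Z) where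
  toFun h := h ∘ₗ g
  map_add' _ _ := rfl
  map_smul' _ _ := rfl


/-- `I` is an injective object for the exact structure `F_Mo`: it lies in
`add(DB ⊕ τ Mo)`. -/
def IsFInj (Mo I : ModuleCat.{u} B) : Prop :=
  ∃ T, IsTauOf k B Mo T ∧ InAdd B (ModuleCat.of B ((Dcogen k B) × T)) I

/-- `T` is an `F_Mo`-cotilting object: finite relative injective dimension, no relative
self-extensions, and the relative injectives `DB ⊕ τ Mo` admit a finite `F_Mo`-exact
resolution by objects of `add T`. -/
def FCotilting (Mo T : ModuleCat.{u} B) : Prop :=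
  (∃ r, CoresLE B Mo (IsFInj k B Mo) T r) ∧
  (∀ i, 1 ≤ i → FExtVanish B Mo T T i) ∧
  (∃ τM, IsTauOf k B Mo τM ∧
    ∃ r, ResLE B Mo (InAdd B T) (ModuleCat.of B ((Dcogen k B) × τM)) r)

end Duality

section EndStuff
variable (A : Type u) [Ring A] (Q : ModuleCat.{u} A)

/-- The canonical ring homomorphism `A → End_{End_A(Q)}(Q)`. -/
def toEndE : A →+* Module.End (Module.End A Q) Q where
  toFun a :=
    { toFun := fun q => a • q
      map_add' := fun x y => smul_add a x y
      map_smul' := fun e q => (e.map_smul a q).symm }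
  map_one' := by ext q; exact one_smul A q
  map_mul' x y := by ext q; exact mul_smul x y q
  map_zero' := by ext q; exact zero_smul A q
  map_add' x y := by ext q; exact add_smul x y q

/-- `Hom_A(Q, X)` as a left module over `End_A(Q)ᵐᵒᵖ` (i.e. a left `Λ`-module) by
precomposition. -/
noncomputable instance homPrecompMod (X : ModuleCat.{u} A) :
    Module (Module.End A Q)ᵐᵒᵖ (Q →ₗ[A] X) where
  smul e f := f ∘ₗ e.unop
  one_smul f := by ext q; rfl
  mul_smul e e' f := by ext q; rfl
  smul_zero e := rfl
  smul_add e f g := rfl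
  add_smul e e' f := by ext q; exact map_add f _ _
  zero_smul f := by ext q; exact map_zero f

/-- The actions of `A` and of `End_A(Q)` on `Q` commute. -/
instance endSMulComm : SMulCommClass (Module.End A Q) A Q :=
  ⟨fun e a q => e.map_smul a q⟩

instance endSMulComm' : SMulCommClass A (Module.End A Q) Q :=
  ⟨fun a e q => (e.map_smul a q).symm⟩

end EndStuff

end Paper
end

noncomputable section Statement3
open Paper

/-- The evaluation map `M → Hom_Λ(Hom_A(M, Q), Q)`, where `Λ = End_A(Q)^op`, so that
`Hom_A(M, Q)` is a right `Λ`-module, i.e. a left `End_A(Q)`-module. -/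
noncomputable def evalMap (A : Type) [Ring A] (Q M : ModuleCat.{0} A) :
    M →ₗ[A] ((M →ₗ[A] Q) →ₗ[Module.End A Q] Q) where
  toFun m :=
    { toFun := fun f => f m
      map_add' := fun f g => rfl
      map_smul' := fun e f => rfl }
  map_add' x y := by ext f; exact map_add f x y
  map_smul' a x := by ext f; exact map_smul f a x

namespace Stmt3Aux

variable (A : Type) [Ring A] (Q : ModuleCat.{0} A)

/-- Separation: the evaluation map into the double dual is injective. -/
def Sep (X : Type) [AddCommGroup X] [Module A X] : Prop :=
  ∀ x : X, (∀ h : X →ₗ[A] Q, h x = 0) → x = 0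

/-- Surjectivity of the evaluation map. -/
def Srj (X : Type) [AddCommGroup X] [Module A X] : Prop :=
  ∀ φ : (X →ₗ[A] Q) →ₗ[Module.End A Q] Q, ∃ x : X, ∀ f : X →ₗ[A] Q, f x = φ f

lemma end_smul_apply {X : Type} [AddCommGroup X] [Module A X]
    (e : Module.End A Q) (f : X →ₗ[A] Q) (x : X) : (e • f) x = e (f x) := rfl

lemma end_smul_eq_comp {X : Type} [AddCommGroup X] [Module A X]
    (e : Module.End A Q) (f : X →ₗ[A] Q) : e • f = e ∘ₗ f := rfl

lemma sum_comp' {ι : Type} (s : Finset ι) {X Y : Type} [AddCommGroup X] [Module A X]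
    [AddCommGroup Y] [Module A Y] (f : ι → Y →ₗ[A] Q) (g : X →ₗ[A] Y) :
    (∑ i ∈ s, f i) ∘ₗ g = ∑ i ∈ s, f i ∘ₗ g := by
  apply LinearMap.ext; intro x
  rw [LinearMap.comp_apply, LinearMap.sum_apply, LinearMap.sum_apply]
  exact Finset.sum_congr rfl fun i _ => rfl

lemma sep_pi (n : ℕ) : Sep A Q (Fin n → Q) := by
  intro x hx
  funext i
  exact hx (LinearMap.proj i)

lemma pi_eval (n : ℕ) (f : (Fin n → Q) →ₗ[A] Q) (y : Fin n → Q) :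
    f y = ∑ i, (f ∘ₗ LinearMap.single A (fun _ : Fin n => Q) i) (y i) := by
  conv_lhs => rw [← Finset.univ_sum_single y]
  rw [map_sum]
  rfl

lemma srj_pi (n : ℕ) : Srj A Q (Fin n → Q) := by
  intro φ
  refine ⟨fun i => φ (LinearMap.proj i), fun f => ?_⟩
  have hf : f = ∑ i, (f ∘ₗ LinearMap.single A (fun _ : Fin n => Q) i) •
      (LinearMap.proj i : (Fin n → Q) →ₗ[A] Q) := by
    apply LinearMap.ext; intro y
    rw [LinearMap.sum_apply]
    exact pi_eval A Q n f y
  calc f (fun i => φ (LinearMap.proj i))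
      = ∑ i, (f ∘ₗ LinearMap.single A (fun _ : Fin n => Q) i) (φ (LinearMap.proj i)) :=
        pi_eval A Q n f _
    _ = ∑ i, φ ((f ∘ₗ LinearMap.single A (fun _ : Fin n => Q) i) • LinearMap.proj i) := by
        refine Finset.sum_congr rfl fun i _ => ?_
        rw [map_smul]
        rfl
    _ = φ (∑ i, (f ∘ₗ LinearMap.single A (fun _ : Fin n => Q) i) • LinearMap.proj i) :=
        (map_sum φ _ _).symm
    _ = φ f := by rw [← hf]

lemma sep_retract {X Y : Type} [AddCommGroup X] [Module A X] [AddCommGroup Y] [Module A Y]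
    (s : X →ₗ[A] Y) (r : Y →ₗ[A] X) (hrs : r ∘ₗ s = LinearMap.id)
    (hY : Sep A Q Y) : Sep A Q X := by
  intro x hx
  have hsx : s x = 0 := hY (s x) (fun h => hx (h ∘ₗ s))
  have : r (s x) = x := DFunLike.congr_fun hrs x
  rw [← this, hsx, map_zero]

lemma srj_retract {X Y : Type} [AddCommGroup X] [Module A X] [AddCommGroup Y] [Module A Y]
    (s : X →ₗ[A] Y) (r : Y →ₗ[A] X) (hrs : r ∘ₗ s = LinearMap.id)
    (hY : Srj A Q Y) : Srj A Q X := by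
  intro φ
  let ψ : (Y →ₗ[A] Q) →ₗ[Module.End A Q] Q :=
    { toFun := fun h => φ (h ∘ₗ s)
      map_add' := fun h h' => by
        show φ ((h + h') ∘ₗ s) = φ (h ∘ₗ s) + φ (h' ∘ₗ s)
        rw [LinearMap.add_comp, map_add]
      map_smul' := fun e h => by
        show φ ((e • h) ∘ₗ s) = e • φ (h ∘ₗ s)
        have he : (e • h) ∘ₗ s = e • (h ∘ₗ s) := rfl
        rw [he, map_smul] }
  obtain ⟨y, hy⟩ := hY ψ
  refine ⟨r y, fun f => ?_⟩
  have h1 : f (r y) = (f ∘ₗ r) y := rfl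
  have h2 : (f ∘ₗ r) ∘ₗ s = f := by rw [LinearMap.comp_assoc, hrs, LinearMap.comp_id]
  rw [h1, hy (f ∘ₗ r)]
  show φ ((f ∘ₗ r) ∘ₗ s) = φ f
  rw [h2]

lemma inAdd_sep_srj {X : ModuleCat.{0} A} (hX : InAdd A Q X) : Sep A Q X ∧ Srj A Q X := by
  obtain ⟨n, s, r, hrs⟩ := hX
  exact ⟨sep_retract A Q s r hrs (sep_pi A Q n), srj_retract A Q s r hrs (srj_pi A Q n)⟩

lemma evalMap_bijective_iff (X : ModuleCat.{0} A) :
    Function.Bijective (evalMap A Q X) ↔ (Sep A Q X ∧ Srj A Q X) := by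
  constructor
  · rintro ⟨hinj, hsurj⟩
    constructor
    · intro x hx
      have : evalMap A Q X x = evalMap A Q X 0 := by
        rw [map_zero]
        exact LinearMap.ext fun h => hx h
      exact hinj this
    · intro φ
      obtain ⟨x, hx⟩ := hsurj φ
      exact ⟨x, fun f => DFunLike.congr_fun hx f⟩
  · rintro ⟨hsep, hsrj⟩
    constructor
    · rw [injective_iff_map_eq_zero]
      intro x hx
      exact hsep x fun h => DFunLike.congr_fun hx h
    · intro φ
      obtain ⟨x, hx⟩ := hsrj φ
      exact ⟨x, LinearMap.ext fun f => hx f⟩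

section Gen

variable (k : Type) [Field k] [Algebra k A]

/-- The element of `End_A(Q)` given by multiplication by a scalar from `k`. -/
def scalarEnd (c : k) : Module.End A Q where
  toFun q := algebraMap k A c • q
  map_add' x y := smul_add _ x y
  map_smul' a q := by
    rw [RingHom.id_apply, smul_smul, smul_smul, Algebra.commutes]

/-- Any `A`-linear map from a finite module to `Q` is an `End_A(Q)`-combination of
finitely many fixed maps. -/
lemma genLemma [FiniteDimensional k A] [Module.Finite A Q] (N : Type) [AddCommGroup N]
    [Module A N] [Module.Finite A N] :
    ∃ (n : ℕ) (f : Fin n → (N →ₗ[A] Q)), ∀ g : N →ₗ[A] Q,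
      ∃ e : Fin n → Module.End A Q, g = ∑ i, (e i) ∘ₗ (f i) := by
  letI : Module k N := Module.compHom N (algebraMap k A)
  haveI : IsScalarTower k A N :=
    ⟨fun c a x => by
      show (c • a) • x = (algebraMap k A c) • (a • x)
      rw [Algebra.smul_def, mul_smul]⟩
  haveI : Module.Finite k N := Module.Finite.trans A N
  haveI : Module.Finite k Q := Module.Finite.trans A Q
  let ρ : (N →ₗ[A] Q) →ₗ[k] (N →ₗ[k] Q) :=
    { toFun := fun h => h.restrictScalars k
      map_add' := fun _ _ => rfl
      map_smul' := fun _ _ => rfl }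
  haveI : Module.Finite k (N →ₗ[A] Q) := by
    refine Module.Finite.of_injective ρ ?_
    intro a b hab
    ext x
    exact DFunLike.congr_fun hab x
  obtain ⟨n, s, hs⟩ := Module.Finite.exists_fin (R := k) (M := N →ₗ[A] Q)
  refine ⟨n, s, fun g => ?_⟩
  have hg : g ∈ Submodule.span k (Set.range s) := hs ▸ Submodule.mem_top
  obtain ⟨c, hc⟩ := (Submodule.mem_span_range_iff_exists_fun k).mp hg
  refine ⟨fun i => scalarEnd A Q k (c i), ?_⟩
  ext m
  rw [← hc, LinearMap.sum_apply, LinearMap.sum_apply]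
  refine Finset.sum_congr rfl fun i _ => ?_
  show c i • (s i m) = algebraMap k A (c i) • (s i m)
  rw [algebraMap_smul]

end Gen

end Stmt3Aux

open Stmt3Aux in
/-- relative Mueller theorem, Theorem 2.2 (α): the evaluation map
`M → Hom_Λ(Hom_A(M, Q), Q)` is an isomorphism if and only if `Q`-domdim of `M` is
at least `2`. -/
theorem stmt3 (k : Type) [Field k] (A : Type) [Ring A] [Algebra k A] [FiniteDimensional k A]
    (Q M : ModuleCat.{0} A) [Module.Finite A Q] [Module.Finite A M] :
    Function.Bijective (evalMap A Q M) ↔ domdimGE A Q M 2 := by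
  constructor
  · -- forward direction
    intro hb
    obtain ⟨sepM, srjM⟩ := (evalMap_bijective_iff A Q M).mp hb
    obtain ⟨n, f, hf⟩ := genLemma A Q k (↑M)
    set ι : ↑M →ₗ[A] (Fin n → ↑Q) := LinearMap.pi f with hιdef
    haveI : Module.Finite A ((Fin n → ↑Q) ⧸ LinearMap.range ι) :=
      Module.Finite.of_surjective (LinearMap.range ι).mkQ (Submodule.mkQ_surjective _)
    obtain ⟨r, g, hg⟩ := genLemma A Q k ((Fin n → ↑Q) ⧸ LinearMap.range ι)
    set π : (Fin n → ↑Q) →ₗ[A] ((Fin n → ↑Q) ⧸ LinearMap.range ι) :=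
      (LinearMap.range ι).mkQ with hπdef
    set d0 : (Fin n → ↑Q) →ₗ[A] (Fin r → ↑Q) := LinearMap.pi (fun j => g j ∘ₗ π) with hd0def
    have hproj : ∀ i, (LinearMap.proj i : (Fin n → ↑Q) →ₗ[A] ↑Q) ∘ₗ ι = f i :=
      fun i => LinearMap.proj_pi f i
    have hprojd : ∀ j, (LinearMap.proj j : (Fin r → ↑Q) →ₗ[A] ↑Q) ∘ₗ d0 = g j ∘ₗ π :=
      fun j => LinearMap.proj_pi _ j
    -- every map M → Q lifts along ι
    have hlift : ∀ f' : ↑M →ₗ[A] ↑Q, ∃ h : (Fin n → ↑Q) →ₗ[A] ↑Q, h ∘ₗ ι = f' := by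
      intro f'
      obtain ⟨e, he⟩ := hf f'
      refine ⟨∑ i, e i ∘ₗ LinearMap.proj i, ?_⟩
      rw [sum_comp', he]
      exact Finset.sum_congr rfl fun i _ => by rw [LinearMap.comp_assoc, hproj]
    -- maps killing range ι kill y whenever d0 y = 0
    have key : ∀ y : Fin n → ↑Q, d0 y = 0 →
        ∀ h : (Fin n → ↑Q) →ₗ[A] ↑Q, h ∘ₗ ι = 0 → h y = 0 := by
      intro y hy h hh
      have hker : LinearMap.range ι ≤ LinearMap.ker h := by
        rintro _ ⟨m, rfl⟩
        exact LinearMap.mem_ker.mpr (DFunLike.congr_fun hh m)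
      have hhb : ((LinearMap.range ι).liftQ h hker) ∘ₗ π = h := Submodule.liftQ_mkQ _ _ _
      obtain ⟨e, he⟩ := hg ((LinearMap.range ι).liftQ h hker)
      have hz : ((LinearMap.range ι).liftQ h hker) (π y) = 0 := by
        rw [he, LinearMap.sum_apply]
        refine Finset.sum_eq_zero fun j _ => ?_
        have h2 : g j (π y) = 0 := congrFun hy j
        show e j (g j (π y)) = 0
        rw [h2, map_zero]
      calc h y = (((LinearMap.range ι).liftQ h hker) ∘ₗ π) y :=
            (DFunLike.congr_fun hhb y).symm
        _ = 0 := hz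
    have wd : ∀ y : Fin n → ↑Q, d0 y = 0 → ∀ h h' : (Fin n → ↑Q) →ₗ[A] ↑Q,
        h ∘ₗ ι = h' ∘ₗ ι → h y = h' y := by
      intro y hy h h' hhh
      have hsub : (h - h') ∘ₗ ι = 0 := by rw [LinearMap.sub_comp, hhh, sub_self]
      have := key y hy (h - h') hsub
      rw [LinearMap.sub_apply] at this
      exact sub_eq_zero.mp this
    have hexact : Function.Exact ι d0 := by
      intro y
      constructor
      · intro hy
        let φ : (↑M →ₗ[A] ↑Q) →ₗ[Module.End A ↑Q] ↑Q :=
          { toFun := fun f' => (hlift f').choose y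
            map_add' := fun f1 f2 => by
              have hcomp : (hlift (f1 + f2)).choose ∘ₗ ι =
                  ((hlift f1).choose + (hlift f2).choose) ∘ₗ ι := by
                rw [LinearMap.add_comp, (hlift f1).choose_spec, (hlift f2).choose_spec,
                  (hlift (f1 + f2)).choose_spec]
              have := wd y hy _ _ hcomp
              simpa using this
            map_smul' := fun e f' => by
              have hcomp : (hlift (e • f')).choose ∘ₗ ι =
                  (e • (hlift f').choose) ∘ₗ ι := by
                rw [(hlift (e • f')).choose_spec]
                have h3 : (e • (hlift f').choose) ∘ₗ ι = e • ((hlift f').choose ∘ₗ ι) := rfl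
                rw [h3, (hlift f').choose_spec]
              have h4 := wd y hy _ _ hcomp
              rw [RingHom.id_apply]
              exact h4 }
        obtain ⟨m, hm⟩ := srjM φ
        refine ⟨m, ?_⟩
        funext i
        have h5 : f i m = φ (f i) := hm (f i)
        have h6 : φ (f i) = y i := by
          have := wd y hy (hlift (f i)).choose (LinearMap.proj i)
            (by rw [(hlift (f i)).choose_spec, hproj])
          exact this
        show f i m = y i
        rw [h5, h6]
      · rintro ⟨m, rfl⟩
        funext j
        show g j (π (ι m)) = 0
        have : π (ι m) = 0 := by
          rw [hπdef, Submodule.mkQ_apply, Submodule.Quotient.mk_eq_zero]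
          exact ⟨m, rfl⟩
        rw [this, map_zero]
    refine Or.inr ?_
    refine ⟨fun j => Nat.rec (ModuleCat.of A (Fin n → ↑Q))
        (fun _ _ => ModuleCat.of A (Fin r → ↑Q)) j, ι,
      fun j => Nat.rec (motive := fun j => (Nat.rec (ModuleCat.of A (Fin n → ↑Q))
          (fun _ _ => ModuleCat.of A (Fin r → ↑Q)) j : ModuleCat.{0} A) →ₗ[A]
          (Nat.rec (ModuleCat.of A (Fin n → ↑Q))
          (fun _ _ => ModuleCat.of A (Fin r → ↑Q)) (j+1) : ModuleCat.{0} A))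
        d0 (fun _ _ => 0) j,
      ?_, ?_, ?_, ?_, ?_, ?_, ?_⟩
    · -- InAdd
      intro j hj
      match j, hj with
      | 0, _ => exact ⟨n, LinearMap.id, LinearMap.id, rfl⟩
      | 1, _ => exact ⟨r, LinearMap.id, LinearMap.id, rfl⟩
    · -- injectivity
      intro a b hab
      have hsub : a - b = 0 := by
        refine sepM (a - b) fun h => ?_
        obtain ⟨e, he⟩ := hf h
        rw [he, LinearMap.sum_apply]
        refine Finset.sum_eq_zero fun i _ => ?_
        have : f i (a - b) = 0 := by
          rw [map_sub]
          have : f i a = f i b := congrFun hab i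
          rw [this, sub_self]
        show e i (f i (a - b)) = 0
        rw [this, map_zero]
      exact sub_eq_zero.mp hsub
    · exact fun _ => hexact
    · intro j hj; exact absurd hj (by omega)
    · exact hlift
    · -- lift1
      intro _ F hF
      have hker : LinearMap.range ι ≤ LinearMap.ker F := by
        rintro _ ⟨m, rfl⟩
        exact LinearMap.mem_ker.mpr (DFunLike.congr_fun hF m)
      have hFb : ((LinearMap.range ι).liftQ F hker) ∘ₗ π = F := Submodule.liftQ_mkQ _ _ _
      obtain ⟨e, he⟩ := hg ((LinearMap.range ι).liftQ F hker)
      refine ⟨∑ j, e j ∘ₗ LinearMap.proj j, ?_⟩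
      show (∑ j, e j ∘ₗ LinearMap.proj j) ∘ₗ d0 = F
      rw [sum_comp']
      have h7 : ∀ j, (e j ∘ₗ LinearMap.proj j) ∘ₗ d0 = (e j ∘ₗ g j) ∘ₗ π := by
        intro j
        rw [LinearMap.comp_assoc, hprojd, ← LinearMap.comp_assoc]
      calc (∑ j, (e j ∘ₗ LinearMap.proj j) ∘ₗ d0) = ∑ j, (e j ∘ₗ g j) ∘ₗ π :=
            Finset.sum_congr rfl fun j _ => h7 j
        _ = (∑ j, e j ∘ₗ g j) ∘ₗ π := (sum_comp' A Q _ _ _).symm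
        _ = ((LinearMap.range ι).liftQ F hker) ∘ₗ π := by rw [← he]
        _ = F := hFb
    · intro j hj; exact absurd hj (by omega)
  · -- backward direction
    intro hd
    rcases hd with h0 | ⟨W, ι, d, hmem, hinj, hex, _, hlift0, _, _⟩
    · exact absurd h0 (by norm_num)
    rw [evalMap_bijective_iff]
    obtain ⟨sep0, srj0⟩ := inAdd_sep_srj A Q (hmem 0 (by norm_num))
    obtain ⟨sep1, _⟩ := inAdd_sep_srj A Q (hmem 1 (by norm_num))
    have hex2 := hex (le_refl 2)
    constructor
    · intro m hm
      have h1 : ι m = 0 := sep0 (ι m) (fun h => hm (h ∘ₗ ι))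
      exact hinj (by rw [h1, map_zero])
    · intro φ
      let ψ : (↑(W 0) →ₗ[A] ↑Q) →ₗ[Module.End A ↑Q] ↑Q :=
        { toFun := fun h => φ (h ∘ₗ ι)
          map_add' := fun h h' => by
            show φ ((h + h') ∘ₗ ι) = φ (h ∘ₗ ι) + φ (h' ∘ₗ ι)
            rw [LinearMap.add_comp, map_add]
          map_smul' := fun e h => by
            show φ ((e • h) ∘ₗ ι) = e • φ (h ∘ₗ ι)
            have h2 : (e • h) ∘ₗ ι = e • (h ∘ₗ ι) := rfl
            rw [h2, map_smul] }
      obtain ⟨x, hx⟩ := srj0 ψ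
      have hdx : d 0 x = 0 := by
        apply sep1
        intro h'
        have h1 : h' (d 0 x) = (h' ∘ₗ d 0) x := rfl
        rw [h1, hx (h' ∘ₗ d 0)]
        show φ ((h' ∘ₗ d 0) ∘ₗ ι) = 0
        have h3 : (h' ∘ₗ d 0) ∘ₗ ι = 0 := by
          apply LinearMap.ext; intro m
          show h' (d 0 (ι m)) = 0
          have h4 : d 0 (ι m) = 0 := (hex2 (ι m)).mpr ⟨m, rfl⟩
          rw [h4, map_zero]
        rw [h3, map_zero]
      obtain ⟨m, hm⟩ := (hex2 x).mp hdx
      refine ⟨m, fun f => ?_⟩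
      obtain ⟨h, hh⟩ := hlift0 f
      have h5 : f m = h (ι m) := by rw [← hh]; rfl
      rw [h5, hm, hx h]
      show φ (h ∘ₗ ι) = φ f
      rw [hh]

end Statement3
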